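/- For Re(t) > 1, x > 0, and r real with r + t > 1, the integral ∫_0^∞ y^{t-1} e^{-xy} Li_r(e^{-y}) dy equals Γ(t) Σ_{n=1}^{∞} 1/(n^r (x+n)^t), where Li_r(z) = Σ_{u=1}^{∞} z^u/u^r is the polylogarithm. -/

import Mathlib

open Real

/-- The polylogarithm `Li_r(z) = ∑_{u≥1} z^u / u^r`. -/
noncomputable def polylog (r : ℝ) (z : ℝ) : ℝ := ∑' u : ℕ, z ^ (u + 1) / ((u : ℝ) + 1) ^ r

open MeasureTheory in
theorem polylog_integral (t : ℝ) (ht : 1 < t) (x : ℝ) (hx : 0 < x) (r : ℝ)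
    (hrt : 1 < r + t) :
    ∫ y in Set.Ioi (0 : ℝ), y ^ (t - 1) * Real.exp (-x * y) * polylog r (Real.exp (-y))
      = Real.Gamma t * ∑' n : ℕ, 1 / (((n : ℝ) + 1) ^ r * (x + ((n : ℝ) + 1)) ^ t) := by
  have ht0 : 0 < t := by linarith
  set F : ℕ → ℝ → ℝ := fun n y =>
    y ^ (t - 1) * Real.exp (-(x + ((n : ℝ) + 1)) * y) / ((n : ℝ) + 1) ^ r with hF
  have hb : ∀ n : ℕ, 0 < x + ((n : ℝ) + 1) := fun n => by positivity
  have hn1 : ∀ n : ℕ, (0:ℝ) < (n : ℝ) + 1 := fun n => by positivity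
  -- integrability of each term
  have hint : ∀ n, IntegrableOn (F n) (Set.Ioi (0:ℝ)) := by
    intro n
    have h1 : IntegrableOn (fun y : ℝ => y ^ (t-1) * Real.exp (-(x + ((n:ℝ)+1)) * y))
        (Set.Ioi (0:ℝ)) := by
      have := integrableOn_rpow_mul_exp_neg_mul_rpow (p := 1) (s := t-1)
        (by linarith) one_pos (hb n)
      simpa [Real.rpow_one] using this
    simpa [hF, div_eq_mul_inv, IntegrableOn] using h1.mul_const ((((n : ℝ) + 1) ^ r)⁻¹)
  -- value of each integral
  have hval : ∀ n, ∫ y in Set.Ioi (0:ℝ), F n y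
      = Real.Gamma t * (1 / (((n : ℝ) + 1) ^ r * (x + ((n : ℝ) + 1)) ^ t)) := by
    intro n
    have h0 : ∫ y in Set.Ioi (0:ℝ), y ^ (t-1) * Real.exp (-(x + ((n:ℝ)+1)) * y)
        = (1 / (x + ((n:ℝ)+1))) ^ t * Real.Gamma t := by
      simp_rw [neg_mul]
      exact integral_rpow_mul_exp_neg_mul_Ioi ht0 (hb n)
    have hne1 : ((n : ℝ) + 1) ^ r ≠ 0 := (Real.rpow_pos_of_pos (hn1 n) r).ne'
    have hne2 : (x + ((n : ℝ) + 1)) ^ t ≠ 0 := (Real.rpow_pos_of_pos (hb n) t).ne'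
    simp only [hF]
    rw [integral_div, h0, one_div, Real.inv_rpow (hb n).le, one_div, mul_inv,
      div_eq_mul_inv]
    ring
  -- nonnegativity
  have hnonneg : ∀ n, ∀ y ∈ Set.Ioi (0:ℝ), 0 ≤ F n y := by
    intro n y hy
    have hy' : (0:ℝ) < y := hy
    have := (Real.rpow_pos_of_pos (hn1 n) r)
    positivity
  have hnormint : ∀ n : ℕ, ∫ y in Set.Ioi (0:ℝ), ‖F n y‖
      = Real.Gamma t * (1 / (((n : ℝ) + 1) ^ r * (x + ((n : ℝ) + 1)) ^ t)) := by
    intro n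
    rw [← hval n]
    refine setIntegral_congr_fun measurableSet_Ioi fun y hy => ?_
    exact Real.norm_of_nonneg (hnonneg n y hy)
  -- summability of the values
  have hsum : Summable (fun n : ℕ =>
      Real.Gamma t * (1 / (((n : ℝ) + 1) ^ r * (x + ((n : ℝ) + 1)) ^ t))) := by
    have h1 : Summable (fun n : ℕ => 1 / ((n : ℝ) + 1) ^ (r + t)) := by
      have h0 := (Real.summable_one_div_nat_rpow (p := r + t)).mpr hrt
      have h2 := (summable_nat_add_iff 1).mpr h0
      simpa using h2
    refine Summable.of_nonneg_of_le (fun n => by positivity) (fun n => ?_)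
      (h1.mul_left (Real.Gamma t))
    have hGamma : 0 ≤ Real.Gamma t := (Real.Gamma_pos_of_pos ht0).le
    have hC : (0:ℝ) < ((n:ℝ)+1) ^ (r+t) := Real.rpow_pos_of_pos (hn1 n) _
    have key : ((n:ℝ)+1) ^ (r+t) ≤ ((n:ℝ)+1) ^ r * (x + ((n:ℝ)+1)) ^ t := by
      rw [Real.rpow_add (hn1 n)]
      exact mul_le_mul_of_nonneg_left
        (Real.rpow_le_rpow (hn1 n).le (by linarith) ht0.le)
        (Real.rpow_nonneg (hn1 n).le r)
    exact mul_le_mul_of_nonneg_left (one_div_le_one_div_of_le hC key) hGamma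
  have hnorm_sum : Summable fun n : ℕ => ∫ y in Set.Ioi (0:ℝ), ‖F n y‖ := by
    have heq : (fun n : ℕ => ∫ y in Set.Ioi (0:ℝ), ‖F n y‖)
        = fun n : ℕ => Real.Gamma t * (1 / (((n : ℝ) + 1) ^ r * (x + ((n : ℝ) + 1)) ^ t)) :=
      funext hnormint
    rw [heq]; exact hsum
  -- pointwise identity with the polylog
  have hpt : ∀ y : ℝ, ∑' n : ℕ, F n y
      = y ^ (t - 1) * Real.exp (-x * y) * polylog r (Real.exp (-y)) := by
    intro y
    rw [polylog, ← tsum_mul_left]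
    refine tsum_congr fun n => ?_
    have he : Real.exp (-(x + ((n:ℝ)+1)) * y)
        = Real.exp (-x * y) * Real.exp (-y) ^ (n+1) := by
      rw [← Real.exp_nat_mul, ← Real.exp_add]
      congr 1
      push_cast
      ring
    simp only [hF]
    rw [he]
    ring
  calc ∫ y in Set.Ioi (0:ℝ), y ^ (t - 1) * Real.exp (-x * y) * polylog r (Real.exp (-y))
      = ∫ y in Set.Ioi (0:ℝ), ∑' n : ℕ, F n y :=
        setIntegral_congr_fun measurableSet_Ioi fun y _ => (hpt y).symm
    _ = ∑' n : ℕ, ∫ y in Set.Ioi (0:ℝ), F n y :=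
        (integral_tsum_of_summable_integral_norm hint hnorm_sum).symm
    _ = Real.Gamma t * ∑' n : ℕ, 1 / (((n : ℝ) + 1) ^ r * (x + ((n : ℝ) + 1)) ^ t) := by
        simp_rw [hval]
        rw [tsum_mul_left]
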